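/- Let n ≥ 1 and let μ, μ' be dominant words over {1,…,n} with canonical factorizations μ = i^(1) i^(2) ⋯ i^(r) and μ' = i'^(1) i'^(2) ⋯ i'^(r') (Lyndon factors in weakly decreasing lexicographic order). If the last Lyndon factor of μ is lexicographically greater than or equal to the first Lyndon factor of μ', i.e. i^(r) ≥ i'^(1), then the lexicographically greatest shuffle of μ and μ' equals the concatenation μμ'. -/

import Mathlib

/-- `IsShuffle u v w` : the word `w` is a shuffle (interleaving) of the words `u` and `v`. -/
inductive IsShuffle : List ℕ → List ℕ → List ℕ → Prop
  | nil : IsShuffle [] [] []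
  | left (a : ℕ) {u v w : List ℕ} : IsShuffle u v w → IsShuffle (a :: u) v (a :: w)
  | right (a : ℕ) {u v w : List ℕ} : IsShuffle u v w → IsShuffle u (a :: v) (a :: w)

/-- The segment ⟨k,l⟩, i.e. the word (k, k+1, …, l). -/
def segWord (k l : ℕ) : List ℕ := List.range' k (l + 1 - k)

/-- `w` is a segment of the alphabet {1,…,n}. -/
def IsSegment (n : ℕ) (w : List ℕ) : Prop :=
  ∃ k l : ℕ, 1 ≤ k ∧ k ≤ l ∧ l ≤ n ∧ w = segWord k l

namespace MaxSh
open List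

/-! ### order lemmas -/

lemma nil_le_list (l : List ℕ) : ([] : List ℕ) ≤ l := by
  cases l with
  | nil => exact le_refl _
  | cons a t => exact le_of_lt (List.nil_lt_cons a t)

lemma le_of_head_lt {a b : ℕ} {u v : List ℕ} (h : a < b) : a :: u ≤ b :: v :=
  le_of_lt (show List.Lex (· < ·) (a :: u) (b :: v) from List.Lex.rel h)

lemma head_le_of_le {a b : ℕ} {u v : List ℕ} (h : a :: u ≤ b :: v) : a ≤ b := by
  by_contra hb
  push_neg at hb
  exact absurd (show b :: v < a :: u from List.Lex.rel hb) (not_lt.mpr h)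

lemma lt_append {x : ℕ} {y : List ℕ} : ∀ (u : List ℕ), u < u ++ x :: y
  | [] => List.nil_lt_cons _ _
  | a :: u => show List.Lex (· < ·) _ _ from List.Lex.cons (lt_append u)

/-! ### shuffle lemmas -/

theorem shuffle_nil_left : ∀ {v w : List ℕ}, IsShuffle [] v w → w = v
  | _, _, .nil => rfl
  | _, _, .right a h => by rw [shuffle_nil_left h]

theorem shuffle_nil_right : ∀ {u w : List ℕ}, IsShuffle u [] w → w = u
  | _, _, .nil => rfl
  | _, _, .left a h => by rw [shuffle_nil_right h]

theorem shuffle_refl_right : ∀ (v : List ℕ), IsShuffle [] v v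
  | [] => .nil
  | a :: v => .right a (shuffle_refl_right v)

theorem shuffle_append : ∀ (u v : List ℕ), IsShuffle u v (u ++ v)
  | [], v => shuffle_refl_right v
  | a :: u, v => .left a (shuffle_append u v)

/-! ### segments and flattening -/

def PGE (p q : ℕ × ℕ) : Prop := q.1 < p.1 ∨ (p.1 = q.1 ∧ q.2 ≤ p.2)

def Valid (ps : List (ℕ × ℕ)) : Prop := ∀ p ∈ ps, p.1 ≤ p.2

def flatS (ps : List (ℕ × ℕ)) : List ℕ := (ps.map fun p => segWord p.1 p.2).flatten

lemma pge_refl (p : ℕ × ℕ) : PGE p p := Or.inr ⟨rfl, le_refl _⟩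

lemma pge_trans {p q r : ℕ × ℕ} (h1 : PGE p q) (h2 : PGE q r) : PGE p r := by
  rcases h1 with h1 | ⟨h1, h1'⟩ <;> rcases h2 with h2 | ⟨h2, h2'⟩ <;>
    simp only [PGE] <;> omega

lemma seg_len (k l : ℕ) : (segWord k l).length = l + 1 - k := List.length_range'

lemma seg_cons {k l : ℕ} (h : k ≤ l) : segWord k l = k :: segWord (k + 1) l := by
  unfold segWord
  rw [show l + 1 - k = (l - k) + 1 by omega, List.range'_succ,
    show l + 1 - (k + 1) = l - k by omega]

lemma seg_get {k l : ℕ} (i : ℕ) (h : i < l + 1 - k) :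
    (segWord k l)[i]'(by rw [seg_len]; exact h) = k + i := by
  unfold segWord
  rw [List.getElem_range']
  omega

lemma flat_nil : flatS [] = [] := rfl

lemma flat_cons (p : ℕ × ℕ) (t : List (ℕ × ℕ)) :
    flatS (p :: t) = segWord p.1 p.2 ++ flatS t := by
  simp [flatS]

lemma flat_append (xs ys : List (ℕ × ℕ)) : flatS (xs ++ ys) = flatS xs ++ flatS ys := by
  simp [flatS]

lemma flat_head {k l : ℕ} (t : List (ℕ × ℕ)) (h : k ≤ l) :
    flatS ((k, l) :: t) = k :: (segWord (k + 1) l ++ flatS t) := by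
  rw [flat_cons]
  simp only [seg_cons h, List.cons_append]

lemma flat_len_cons {k l : ℕ} (t : List (ℕ × ℕ)) :
    (flatS ((k, l) :: t)).length = (l + 1 - k) + (flatS t).length := by
  rw [flat_cons, List.length_append, seg_len]

lemma flat_ne_nil_iff (ps : List (ℕ × ℕ)) (hv : Valid ps) : flatS ps = [] ↔ ps = [] := by
  cases ps with
  | nil => simp [flat_nil]
  | cons p t =>
    constructor
    · intro h
      exfalso
      have hp := hv p (List.mem_cons_self)
      have h1 : (flatS (p :: t)).length = 0 := by rw [h]; rfl
      have h2 : (flatS (p :: t)).length = (p.2 + 1 - p.1) + (flatS t).length := by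
        rw [flat_cons, List.length_append, seg_len]
      omega
    · intro h; exact absurd h (by simp)

/-- lower bound on all letters -/
lemma flat_lb {A : ℕ} : ∀ (ps : List (ℕ × ℕ)), Valid ps → (∀ p ∈ ps, A ≤ p.1) →
    ∀ i (h : i < (flatS ps).length), A ≤ (flatS ps)[i]
  | [], _, _ => by intro i h; simp [flat_nil] at h
  | p :: t, hv, hs => by
    intro i h
    rw [flat_cons] at h
    simp only [flat_cons]
    by_cases hi : i < (segWord p.1 p.2).length
    · rw [List.getElem_append_left hi]
      have := hs p (List.mem_cons_self)
      have hkl := hv p (List.mem_cons_self)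
      rw [seg_len] at hi
      rw [seg_get i hi]
      omega
    · rw [List.getElem_append_right (le_of_not_gt hi)]
      exact flat_lb t (fun q hq => hv q (List.mem_cons_of_mem _ hq))
        (fun q hq => hs q (List.mem_cons_of_mem _ hq)) _ _

/-- structure of consecutive letters -/
lemma flat_pos : ∀ (ps : List (ℕ × ℕ)), Valid ps → List.Chain' PGE ps →
    ∀ i (h : i + 1 < (flatS ps).length),
    (flatS ps)[i + 1] = (flatS ps)[i]'(by omega) + 1 ∨
      ∃ p ∈ ps, (flatS ps)[i + 1] = p.1 ∧ p.1 ≤ (flatS ps)[i]'(by omega)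
  | [], _, _ => by intro i h; simp [flat_nil] at h
  | p :: t, hv, hc => by
    intro i h
    have hp : p.1 ≤ p.2 := hv p (List.mem_cons_self)
    have hL : (segWord p.1 p.2).length = p.2 + 1 - p.1 := seg_len _ _
    rw [flat_cons] at h
    simp only [flat_cons]
    rcases lt_trichotomy (i + 1) (segWord p.1 p.2).length with h1 | h1 | h1
    · left
      rw [List.getElem_append_left h1, List.getElem_append_left (by omega : i < (segWord p.1 p.2).length)]
      rw [seg_get (i+1) (by omega), seg_get i (by omega)]
      omega
    · -- boundary
      right
      have hi : i < (segWord p.1 p.2).length := by omega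
      have htne : flatS t ≠ [] := by
        intro he
        rw [he] at h
        simp at h
        omega
      obtain ⟨ph, tt, rfl⟩ : ∃ ph tt, t = ph :: tt := by
        cases t with
        | nil => exact absurd rfl htne
        | cons x xs => exact ⟨x, xs, rfl⟩
      have hph : ph.1 ≤ ph.2 := hv ph (by simp)
      have hchain : PGE p ph := by
        rcases List.isChain_cons.mp hc with ⟨hy, _⟩
        exact hy ph (by simp)
      refine ⟨ph, by simp, ?_, ?_⟩
      · rw [List.getElem_append_right (by omega : (segWord p.1 p.2).length ≤ i + 1)]
        simp only [flat_cons]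
        have h0 : i + 1 - (segWord p.1 p.2).length = 0 := by omega
        simp only [h0]
        rw [List.getElem_append_left (by rw [seg_len]; omega : 0 < (segWord ph.1 ph.2).length)]
        rw [seg_get 0 (by omega)]
        omega
      · rw [List.getElem_append_left hi, seg_get i (by omega)]
        rcases hchain with hc1 | ⟨hc1, hc2⟩ <;> omega
    · -- recurse
      have hL1 : (segWord p.1 p.2).length ≤ i := by omega
      rw [List.getElem_append_right (by omega : (segWord p.1 p.2).length ≤ i + 1),
        List.getElem_append_right hL1]
      have e : i + 1 - (segWord p.1 p.2).length = (i - (segWord p.1 p.2).length) + 1 := by omega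
      simp only [e]
      have ht := flat_pos t (fun q hq => hv q (List.mem_cons_of_mem _ hq))
        (List.isChain_cons.mp hc).2 (i - (segWord p.1 p.2).length)
        (by rw [List.length_append] at h; omega)
      rcases ht with ht | ⟨q, hq, hq1, hq2⟩
      · left; exact ht
      · right; exact ⟨q, List.mem_cons_of_mem _ hq, hq1, hq2⟩

/-! ### chain lemmas -/

lemma chain_head_all : ∀ (t : List (ℕ × ℕ)) (p : ℕ × ℕ), List.Chain' PGE (p :: t) →
    ∀ q ∈ t, PGE p q
  | [], p, _ => by simp
  | y :: t, p, hc => by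
    intro q hq
    rcases List.isChain_cons.mp hc with ⟨hy, hc'⟩
    have hpy : PGE p y := hy y (by simp)
    rcases List.mem_cons.mp hq with rfl | hq
    · exact hpy
    · exact pge_trans hpy (chain_head_all t y hc' q hq)

lemma head_pge_of_cross : ∀ (t : List (ℕ × ℕ)) (p q : ℕ × ℕ), List.Chain' PGE (p :: t) →
    (∀ x ∈ (p :: t).getLast?, PGE x q) → PGE p q
  | [], p, q, _, hx => hx p (by simp)
  | y :: t, p, q, hc, hx => by
    rcases List.isChain_cons.mp hc with ⟨hy, hc'⟩
    refine pge_trans (hy y (by simp)) (head_pge_of_cross t y q hc' ?_)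
    intro x hxm
    exact hx x (by rw [List.getLast?_cons_cons]; exact hxm)

lemma starts_eq : ∀ (fst : List (ℕ × ℕ)) (a l₁ : ℕ) (q0 : ℕ × ℕ),
    List.Chain' PGE ((a, l₁) :: fst) → q0.1 = a →
    (∀ x ∈ ((a, l₁) :: fst).getLast?, PGE x q0) →
    ∀ p ∈ (a, l₁) :: fst, p.1 = a ∧ q0.2 ≤ p.2 ∧ p.2 ≤ l₁
  | [], a, l₁, q0, hc, hq0, hcross => by
    intro p hp
    rw [List.mem_singleton] at hp
    subst hp
    have h := hcross (a, l₁) (by simp)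
    rcases h with h | ⟨h1, h2⟩ <;> simp <;> omega
  | y :: fst, a, l₁, q0, hc, hq0, hcross => by
    rcases List.isChain_cons.mp hc with ⟨hy, hc'⟩
    have hay : PGE (a, l₁) y := hy y (by simp)
    have hyq : PGE y q0 := head_pge_of_cross fst y q0 hc'
      (fun x hx => hcross x (by rw [List.getLast?_cons_cons]; exact hx))
    have hy1 : y.1 = a := by
      rcases hay with h | ⟨h, h2⟩ <;> rcases hyq with h' | ⟨h', h2'⟩ <;> omega
    have hy2 : y.2 ≤ l₁ := by
      rcases hay with h | ⟨h, h2⟩ <;> omega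
    have hc'' : List.Chain' PGE ((y.1, y.2) :: fst) := by simpa [List.Chain'] using hc'
    have hcross'' : ∀ x ∈ ((y.1, y.2) :: fst).getLast?, PGE x q0 := by
      intro x hx
      apply hcross x
      rw [List.getLast?_cons_cons]
      simpa using hx
    have hIH := starts_eq fst y.1 y.2 q0 hc'' (by omega) hcross''
    intro p hp
    rcases List.mem_cons.mp hp with rfl | hp'
    · refine ⟨rfl, ?_, le_refl _⟩
      have := (hIH (y.1, y.2) (by simp)).2.1
      omega
    · have := hIH p (by simpa using hp')
      refine ⟨by omega, by omega, by omega⟩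

/-! ### getElem from take equalities -/

lemma take_getElem_eq {u v : List ℕ} {n : ℕ} (h : u.take n = v) {i : ℕ}
    (hi : i < n) (hu : i < u.length) (hv : i < v.length) : u[i] = v[i] := by
  have h1 : i < (u.take n).length := by rw [List.length_take]; omega
  calc u[i] = (u.take n)[i]'h1 := List.getElem_take.symm
  _ = v[i] := List.getElem_of_eq h h1

lemma take_take_getElem_eq {u v : List ℕ} {n : ℕ} (h : u.take n = v.take n) {i : ℕ}
    (hi : i < n) (hu : i < u.length) (hv : i < v.length) : u[i] = v[i] := by
  have h1 : i < (u.take n).length := by rw [List.length_take]; omega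
  have h2 : i < (v.take n).length := by rw [List.length_take]; omega
  calc u[i] = (u.take n)[i]'h1 := List.getElem_take.symm
  _ = (v.take n)[i]'h2 := List.getElem_of_eq h h1
  _ = v[i] := List.getElem_take

lemma flat_get0 {k l : ℕ} (t : List (ℕ × ℕ)) (hkl : k ≤ l)
    (h0 : 0 < (flatS ((k, l) :: t)).length) : (flatS ((k, l) :: t))[0] = k := by
  simp only [flat_head t hkl]
  exact List.getElem_cons_zero _ _ _

/-! ### replicate lemmas -/

lemma w_len (a l r : ℕ) : (flatS (List.replicate r (a, l))).length = r * (l + 1 - a) := by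
  induction r with
  | zero => simp [flat_nil]
  | succ r ih =>
    rw [List.replicate_succ, flat_len_cons, ih]
    ring

lemma w_add (a l x y : ℕ) : flatS (List.replicate (x + y) (a, l)) =
    flatS (List.replicate x (a, l)) ++ flatS (List.replicate y (a, l)) := by
  rw [List.replicate_add, flat_append]

lemma rep_get (a l : ℕ) : ∀ (r i : ℕ) (h : i < (flatS (List.replicate r (a, l))).length),
    (flatS (List.replicate r (a, l)))[i] = a + i % (l + 1 - a)
  | 0, i => by intro h; simp [flat_nil] at h
  | r + 1, i => by
    intro h
    simp only [List.replicate_succ, flat_cons] at h ⊢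
    by_cases hi : i < (segWord a l).length
    · rw [List.getElem_append_left hi]
      rw [seg_len] at hi
      rw [seg_get i hi, Nat.mod_eq_of_lt hi]
    · rw [List.getElem_append_right (le_of_not_gt hi)]
      rw [rep_get a l r _ (by rw [List.length_append] at h; omega)]
      rw [seg_len] at hi ⊢
      congr 1
      rw [Nat.mod_eq_sub_mod (by omega : i ≥ l + 1 - a)]

/-! ### the factor-matching lemma -/

lemma q_lem (a l : ℕ) (hal : a ≤ l) :
    ∀ (q : ℕ) (gs : List (ℕ × ℕ)), Valid gs → List.Chain' PGE gs →
    (∀ p ∈ gs.head?, PGE (a, l) p) →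
    (flatS gs).take (q * (l + 1 - a)) = flatS (List.replicate q (a, l)) →
    q * (l + 1 - a) ≤ (flatS gs).length →
    ∃ gr, gs = List.replicate q (a, l) ++ gr := by
  intro q
  induction q with
  | zero => intro gs _ _ _ _ _; exact ⟨gs, by simp⟩
  | succ q ihq =>
    intro gs hv hc hh htake hlen
    have hL : 1 ≤ l + 1 - a := by omega
    have hmul : (q + 1) * (l + 1 - a) = q * (l + 1 - a) + (l + 1 - a) := by ring
    have hreplen : (flatS (List.replicate (q + 1) (a, l))).length = (q + 1) * (l + 1 - a) :=
      w_len a l (q + 1)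
    obtain ⟨⟨b, l'⟩, gt, rfl⟩ : ∃ pg gt, gs = pg :: gt := by
      cases gs with
      | nil => exfalso; simp [flat_nil] at hlen; omega
      | cons x xs => exact ⟨x, xs, rfl⟩
    have hpg : b ≤ l' := hv (b, l') (by simp)
    have hhp : PGE (a, l) (b, l') := hh (b, l') (by simp)
    have hlenc : (flatS ((b, l') :: gt)).length = (l' + 1 - b) + (flatS gt).length := by
      rw [flat_cons, List.length_append, seg_len]
    have hb : b = a := by
      have h0 := take_getElem_eq htake (i := 0) (by omega) (by omega) (by omega)
      rw [flat_get0 gt hpg (by omega)] at h0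
      rw [rep_get a l (q + 1) 0 (by omega)] at h0
      simpa using h0
    have hl' : l' ≤ l := by
      rcases hhp with h | ⟨h, h2⟩ <;> omega
    have hl'eq : l' = l := by
      by_contra hne
      have hgtne : flatS gt ≠ [] := by
        intro he
        rw [he] at hlenc
        simp at hlenc
        omega
      obtain ⟨⟨c, l''⟩, gtt, rfl⟩ : ∃ ph gtt, gt = ph :: gtt := by
        cases gt with
        | nil => exact absurd rfl hgtne
        | cons x xs => exact ⟨x, xs, rfl⟩
      have hcl'' : c ≤ l'' := hv (c, l'') (by simp)
      have hcle : c ≤ b := by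
        have := (List.isChain_cons.mp hc).1 (c, l'') (by simp)
        rcases this with h | ⟨h, h2⟩ <;> omega
      have hgeti := take_getElem_eq htake (i := l' + 1 - b) (by omega) (by omega) (by omega)
      have hlhs : (flatS ((b, l') :: (c, l'') :: gtt))[l' + 1 - b]'(by omega) = c := by
        simp only [flat_cons]
        rw [List.getElem_append_right (seg_len b l').le]
        simp only [seg_len, Nat.sub_self]
        rw [List.getElem_append_left (by rw [seg_len]; omega)]
        rw [seg_get 0 (by omega)]
        omega
      have hrhs : (flatS (List.replicate (q + 1) (a, l)))[l' + 1 - b]'(by omega)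
          = a + (l' + 1 - b) := by
        rw [rep_get a l (q + 1) _ (by omega), Nat.mod_eq_of_lt (by omega)]
      rw [hlhs, hrhs] at hgeti
      omega
    have hpair : (b, l') = (a, l) := by rw [hb, hl'eq]
    rw [hpair] at hv hc htake
    have hlenc2 : (flatS ((a, l) :: gt)).length = (l + 1 - a) + (flatS gt).length := by
      rw [flat_cons, List.length_append, seg_len]
    have hlen2 : (flatS ((b, l') :: gt)).length = (flatS ((a, l) :: gt)).length := by
      rw [hpair]
    -- peel one segment
    have htk : (flatS gt).take (q * (l + 1 - a)) = flatS (List.replicate q (a, l)) := by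
      rw [flat_cons, hmul] at htake
      rw [List.take_append] at htake
      rw [List.take_of_length_le (by rw [seg_len]; omega)] at htake
      rw [List.replicate_succ, flat_cons] at htake
      have e2 : q * (l + 1 - a) + (l + 1 - a) - (segWord a l).length = q * (l + 1 - a) := by
        rw [seg_len]; omega
      rw [e2] at htake
      exact List.append_cancel_left htake
    have hlen3 : q * (l + 1 - a) ≤ (flatS gt).length := by omega
    have hh2 : ∀ p ∈ gt.head?, PGE (a, l) p := by
      intro p hp
      exact (List.isChain_cons.mp hc).1 p hp
    obtain ⟨gr, rfl⟩ := ihq gt (fun p hp => hv p (List.mem_cons_of_mem _ hp))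
      (List.isChain_cons.mp hc).2 hh2 htk hlen3
    exact ⟨gr, by rw [hpair, List.replicate_succ, List.cons_append]⟩

/-! ### beheading the first segment -/

def behead (k l₁ : ℕ) (fst : List (ℕ × ℕ)) : List (ℕ × ℕ) :=
  if k < l₁ then (k + 1, l₁) :: fst else fst

lemma seg_nil {k l : ℕ} (h : l ≤ k) : segWord (k + 1) l = [] := by
  show List.range' (k + 1) (l + 1 - (k + 1)) = []
  rw [show l + 1 - (k + 1) = 0 by omega]
  rfl

lemma behead_flat {k l₁ : ℕ} {fst : List (ℕ × ℕ)} (hk : k ≤ l₁) :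
    flatS (behead k l₁ fst) = segWord (k + 1) l₁ ++ flatS fst := by
  unfold behead
  split_ifs with h
  · exact flat_cons _ _
  · rw [seg_nil (by omega), List.nil_append]

lemma behead_len {k l₁ : ℕ} {fst : List (ℕ × ℕ)} (hk : k ≤ l₁) :
    (flatS (behead k l₁ fst)).length + 1 = (flatS ((k, l₁) :: fst)).length := by
  rw [behead_flat hk, flat_len_cons, List.length_append, seg_len]
  omega

lemma behead_valid {k l₁ : ℕ} {fst : List (ℕ × ℕ)} (hv : Valid ((k, l₁) :: fst)) :
    Valid (behead k l₁ fst) := by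
  unfold behead
  split_ifs with h
  · intro p hp
    rcases List.mem_cons.mp hp with rfl | hp'
    · simp; omega
    · exact hv p (List.mem_cons_of_mem _ hp')
  · intro p hp
    exact hv p (List.mem_cons_of_mem _ hp)

lemma behead_chain {k l₁ : ℕ} {fst : List (ℕ × ℕ)} (hc : List.Chain' PGE ((k, l₁) :: fst)) :
    List.Chain' PGE (behead k l₁ fst) := by
  unfold behead
  split_ifs with h
  · simp only [List.Chain', List.isChain_cons] at hc ⊢
    refine ⟨?_, hc.2⟩
    intro y hy
    rcases hc.1 y hy with h' | ⟨h', h2⟩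
    · exact Or.inl (by omega)
    · exact Or.inl (by omega)
  · exact (List.isChain_cons.mp hc).2

lemma behead_cross {k l₁ : ℕ} {fst : List (ℕ × ℕ)} (gs' : List (ℕ × ℕ))
    (hcr : ∀ p ∈ ((k, l₁) :: fst).getLast?, ∀ y ∈ gs'.head?, PGE p y) :
    ∀ p ∈ (behead k l₁ fst).getLast?, ∀ y ∈ gs'.head?, PGE p y := by
  unfold behead
  split_ifs with h
  · cases fst with
    | nil =>
      intro p hp y hy
      simp at hp
      subst hp
      rcases hcr (k, l₁) (by simp) y hy with h' | ⟨h', h2⟩ <;> exact Or.inl (by simp; omega)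
    | cons z t =>
      intro p hp y hy
      exact hcr p (by rw [List.getLast?_cons_cons]; rw [List.getLast?_cons_cons] at hp; exact hp) y hy
  · cases fst with
    | nil => intro p hp; simp at hp
    | cons z t =>
      intro p hp y hy
      exact hcr p (by rw [List.getLast?_cons_cons]; exact hp) y hy

/-! ### small replicate helpers -/

lemma rep_head_id {k l₁ a' l : ℕ} {fst : List (ℕ × ℕ)} {rr : ℕ}
    (h : (k, l₁) :: fst = List.replicate rr (a', l)) :
    k = a' ∧ l₁ = l ∧ rr = fst.length + 1 ∧ fst = List.replicate fst.length (k, l₁) := by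
  have hlen : rr = fst.length + 1 := by
    have h' := congrArg List.length h
    simp at h'
    omega
  rw [hlen, List.replicate_succ] at h
  injection h with h1 h2
  rw [Prod.mk.injEq] at h1
  refine ⟨h1.1, h1.2, hlen, ?_⟩
  rw [← h1.1, ← h1.2] at h2
  exact h2

lemma rep_append_head_pge {k l₁ q : ℕ} {gr : List (ℕ × ℕ)} (hq : 1 ≤ q)
    (hcg2 : List.Chain' PGE (List.replicate q (k, l₁) ++ gr)) :
    ∀ y ∈ gr.head?, PGE (k, l₁) y := by
  intro y hy
  refine (List.isChain_append.mp hcg2).2.2 (k, l₁) ?_ y hy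
  rw [List.getLast?_replicate]
  simp [show q ≠ 0 by omega]

lemma last_of_rep {k l₁ : ℕ} {fst : List (ℕ × ℕ)} {rr : ℕ}
    (hrep : (k, l₁) :: fst = List.replicate rr (k, l₁)) :
    ∀ p ∈ ((k, l₁) :: fst).getLast?, p = (k, l₁) := by
  intro p hp
  rw [hrep, List.getLast?_replicate] at hp
  by_cases hr : rr = 0
  · subst hr; simp at hrep
  · simp [hr] at hp
    exact hp.symm

/-! ### the rigidity lemma -/

lemma rigid (fsp gsp : List (ℕ × ℕ)) (m : ℕ)
    (hvf : Valid fsp) (hvg : Valid gsp)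
    (hcf : List.Chain' PGE fsp) (hcg : List.Chain' PGE gsp)
    (hcross : ∀ p ∈ fsp.getLast?, ∀ q ∈ gsp.head?, PGE p q)
    (htake : (flatS fsp).take m = (flatS gsp).take m)
    (hm1 : 1 ≤ m) (hmF : m ≤ (flatS fsp).length) (hmG : m ≤ (flatS gsp).length)
    (hbd : m = (flatS fsp).length ∨
      ∃ h : m < (flatS fsp).length, (flatS fsp)[m] = (flatS fsp)[0]'(by omega)) :
    ∃ a l q rr gr, a ≤ l ∧ fsp = List.replicate rr (a, l) ∧ 1 ≤ rr ∧
      gsp = List.replicate q (a, l) ++ gr ∧ 1 ≤ q ∧ m = q * (l + 1 - a) ∧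
      q ≤ rr ∧ (m < (flatS fsp).length → q < rr) := by
  obtain ⟨⟨k, l₁⟩, fst, rfl⟩ : ∃ pf fst, fsp = pf :: fst := by
    cases fsp with
    | nil => exfalso; simp [flat_nil] at hmF; omega
    | cons x xs => exact ⟨x, xs, rfl⟩
  obtain ⟨⟨b, l₀⟩, gst, rfl⟩ : ∃ pg gst, gsp = pg :: gst := by
    cases gsp with
    | nil => exfalso; simp [flat_nil] at hmG; omega
    | cons x xs => exact ⟨x, xs, rfl⟩
  have hk : k ≤ l₁ := hvf (k, l₁) (by simp)
  have hb0 : b ≤ l₀ := hvg (b, l₀) (by simp)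
  have hlenF : (flatS ((k, l₁) :: fst)).length = (l₁ + 1 - k) + (flatS fst).length :=
    flat_len_cons fst
  have hlenG : (flatS ((b, l₀) :: gst)).length = (l₀ + 1 - b) + (flatS gst).length :=
    flat_len_cons gst
  have hbk : b = k := by
    have h0 := take_take_getElem_eq htake (i := 0) (by omega) (by omega) (by omega)
    rw [flat_get0 fst hk (by omega), flat_get0 gst hb0 (by omega)] at h0
    omega
  have hstarts := starts_eq fst k l₁ (b, l₀) hcf (by simpa using hbk)
    (fun x hx => hcross x hx (b, l₀) (by simp))
  have hl01 : l₀ ≤ l₁ := by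
    have := (hstarts (k, l₁) (by simp)).2.1
    omega
  have hl10 : l₁ ≤ l₀ := by
    by_contra hcon
    push_neg at hcon
    by_cases hmi : m ≤ l₀ + 1 - k
    · rcases hbd with hbd | ⟨hlt, hFm⟩
      · omega
      · have hFm' : (flatS ((k, l₁) :: fst))[m]'hlt = k + m := by
          simp only [flat_cons]
          rw [List.getElem_append_left (by rw [seg_len]; omega)]
          exact seg_get m (by omega)
        rw [hFm', flat_get0 fst hk (by omega)] at hFm
        omega
    · push_neg at hmi
      have hgstne : flatS gst ≠ [] := by
        intro he
        rw [he] at hlenG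
        simp at hlenG
        omega
      obtain ⟨⟨c, l₂⟩, gtt, rfl⟩ : ∃ ph gtt, gst = ph :: gtt := by
        cases gst with
        | nil => exact absurd rfl hgstne
        | cons x xs => exact ⟨x, xs, rfl⟩
      have hc2 : c ≤ l₂ := hvg (c, l₂) (by simp)
      have hcb : c ≤ b := by
        have := (List.isChain_cons.mp hcg).1 (c, l₂) (by simp)
        rcases this with h | ⟨h, h2⟩ <;> omega
      have hgi := take_take_getElem_eq htake (i := l₀ + 1 - k) (by omega) (by omega) (by omega)
      have hFi : (flatS ((k, l₁) :: fst))[l₀ + 1 - k]'(by omega) = k + (l₀ + 1 - k) := by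
        simp only [flat_cons]
        rw [List.getElem_append_left (by rw [seg_len]; omega)]
        exact seg_get _ (by omega)
      have hGi : (flatS ((b, l₀) :: (c, l₂) :: gtt))[l₀ + 1 - k]'(by omega) = c := by
        simp only [flat_cons]
        rw [List.getElem_append_right (by rw [seg_len]; omega)]
        simp only [seg_len, show l₀ + 1 - k - (l₀ + 1 - b) = 0 by omega]
        rw [List.getElem_append_left (by rw [seg_len]; omega)]
        rw [seg_get 0 (by omega)]
        omega
      rw [hFi, hGi] at hgi
      omega
  have hleq : l₀ = l₁ := le_antisymm hl01 hl10
  have hrep : (k, l₁) :: fst = List.replicate (fst.length + 1) (k, l₁) := by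
    have := List.eq_replicate_of_mem (l := (k, l₁) :: fst) (a := (k, l₁)) ?_
    · simpa using this
    · intro p hp
      have h' := hstarts p hp
      have : p.1 = k ∧ p.2 = l₁ := by omega
      exact Prod.ext this.1 this.2
  have hFW : flatS ((k, l₁) :: fst) = flatS (List.replicate (fst.length + 1) (k, l₁)) := by
    rw [← hrep]
  have hFlen : (flatS ((k, l₁) :: fst)).length = (fst.length + 1) * (l₁ + 1 - k) := by
    rw [hFW, w_len]
  have hL1 : 1 ≤ l₁ + 1 - k := by omega
  obtain ⟨qq, hqq, hq1, hqler, hqlt⟩ : ∃ qq, m = qq * (l₁ + 1 - k) ∧ 1 ≤ qq ∧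
      qq ≤ fst.length + 1 ∧ (m < (flatS ((k, l₁) :: fst)).length → qq < fst.length + 1) := by
    rcases hbd with hbd | ⟨hlt, hFm⟩
    · refine ⟨fst.length + 1, by omega, by omega, le_refl _, fun h => absurd hbd (by omega)⟩
    · have hFm' : (flatS ((k, l₁) :: fst))[m]'hlt = k + m % (l₁ + 1 - k) := by
        rw [List.getElem_of_eq hFW hlt]
        exact rep_get k l₁ _ m (by rw [w_len]; omega)
      rw [hFm', flat_get0 fst hk (by omega)] at hFm
      have hmod : m % (l₁ + 1 - k) = 0 := by omega
      obtain ⟨qq, hqq0⟩ := Nat.dvd_of_mod_eq_zero hmod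
      have hqq : m = qq * (l₁ + 1 - k) := by rw [hqq0]; ring
      have h1q : 1 ≤ qq := by
        rcases Nat.eq_zero_or_pos qq with h | h
        · subst h; simp at hqq; omega
        · exact h
      have hqler : qq ≤ fst.length + 1 := by
        have hmm : qq * (l₁ + 1 - k) ≤ (fst.length + 1) * (l₁ + 1 - k) := by omega
        exact Nat.le_of_mul_le_mul_right hmm (by omega)
      refine ⟨qq, hqq, h1q, hqler, fun h => ?_⟩
      have hmm : qq * (l₁ + 1 - k) < (fst.length + 1) * (l₁ + 1 - k) := by omega
      exact Nat.lt_of_mul_lt_mul_right hmm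
  have htq : (flatS ((b, l₀) :: gst)).take m = flatS (List.replicate qq (k, l₁)) := by
    rw [← htake, hFW, show fst.length + 1 = qq + (fst.length + 1 - qq) by omega, w_add]
    exact List.take_left' (by rw [w_len]; omega)
  have hhg : ∀ p ∈ ((b, l₀) :: gst).head?, PGE (k, l₁) p := by
    intro p hp
    simp at hp
    subst hp
    exact Or.inr ⟨by omega, by omega⟩
  obtain ⟨gr, hgr⟩ := q_lem k l₁ hk qq ((b, l₀) :: gst) hvg hcg hhg
    (by rw [← hqq]; exact htq) (by omega)
  exact ⟨k, l₁, qq, fst.length + 1, gr, hk, hrep, by omega, hgr, hq1, hqq, hqler, hqlt⟩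


/-! ### the key maximality lemma -/

lemma key : ∀ (N : ℕ) (fsp gsp : List (ℕ × ℕ)) (m : ℕ) (w : List ℕ),
    Valid fsp → Valid gsp → List.Chain' PGE fsp → List.Chain' PGE gsp →
    (∀ p ∈ fsp.getLast?, ∀ q ∈ gsp.head?, PGE p q) →
    (flatS fsp).take m = (flatS gsp).take m →
    m ≤ (flatS fsp).length → m ≤ (flatS gsp).length →
    (flatS fsp).length + ((flatS gsp).length - m) ≤ N →
    IsShuffle (flatS fsp) ((flatS gsp).drop m) w →
    w ≤ (flatS fsp).drop m ++ flatS gsp := by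
  intro N
  induction N with
  | zero =>
    intro fsp gsp m w _ _ _ _ _ _ hmF hmG hN hsh
    have hF : flatS fsp = [] := List.length_eq_zero_iff.mp (by omega)
    have hY : (flatS gsp).drop m = [] := List.drop_eq_nil_of_le (by omega)
    rw [hF, hY] at hsh
    cases hsh
    exact nil_le_list _
  | succ N IH =>
    intro fsp gsp m w hvf hvg hcf hcg hcross htake hmF hmG hN hsh
    by_cases hF0 : flatS fsp = []
    · have hm0 : m = 0 := by rw [hF0] at hmF; simpa using hmF
      subst hm0
      rw [hF0, List.drop_zero] at hsh
      rw [shuffle_nil_left hsh, hF0, List.drop_zero, List.nil_append]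
    by_cases hG0 : flatS gsp = []
    · have hm0 : m = 0 := by rw [hG0] at hmG; simpa using hmG
      subst hm0
      rw [hG0] at hsh
      simp only [List.drop_nil] at hsh
      rw [shuffle_nil_right hsh, hG0, List.drop_zero, List.append_nil]
    obtain ⟨U, hU⟩ : ∃ U, U = flatS fsp := ⟨_, rfl⟩
    obtain ⟨V, hV⟩ : ∃ V, V = (flatS gsp).drop m := ⟨_, rfl⟩
    rw [← hU, ← hV] at hsh
    cases hsh with
    | nil => exact absurd hU.symm hF0
    | @left a u v w₁ hsh' =>
      subst hV
      obtain ⟨⟨k, l₁⟩, fst, rfl⟩ : ∃ pf fst, fsp = pf :: fst := by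
        cases fsp with
        | nil => exact absurd flat_nil hF0
        | cons x xs => exact ⟨x, xs, rfl⟩
      have hk : k ≤ l₁ := hvf (k, l₁) (by simp)
      have hFc : flatS ((k, l₁) :: fst) = k :: (segWord (k + 1) l₁ ++ flatS fst) :=
        flat_head fst hk
      rw [hFc] at hU
      have hU2 := hU.symm
      injection hU2 with hUa hUb
      subst hUa
      subst hUb
      have hlenF : (flatS ((k, l₁) :: fst)).length = (l₁ + 1 - k) + (flatS fst).length :=
        flat_len_cons fst
      have hblen : (flatS (behead k l₁ fst)).length + 1 = (flatS ((k, l₁) :: fst)).length :=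
        behead_len hk
      rcases Nat.eq_zero_or_pos m with rfl | hm1
      · -- m = 0 : take the letter from F, generic descent
        have happ := IH (behead k l₁ fst) gsp 0 w₁ (behead_valid hvf) hvg
          (behead_chain hcf) hcg (behead_cross gsp hcross) (by simp)
          (Nat.zero_le _) (Nat.zero_le _)
          (by omega)
          (by rw [behead_flat hk, List.drop_zero]; exact hsh')
        rw [List.drop_zero, behead_flat hk] at happ
        rw [List.drop_zero]
        rw [hFc]
        rw [List.cons_append]
        exact List.cons_le_cons _ happ
      · -- m ≥ 1
        obtain ⟨⟨b, l₀⟩, gst, rfl⟩ : ∃ pg gst, gsp = pg :: gst := by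
          cases gsp with
          | nil => exact absurd flat_nil hG0
          | cons x xs => exact ⟨x, xs, rfl⟩
        have hb0 : b ≤ l₀ := hvg (b, l₀) (by simp)
        have hlenG : (flatS ((b, l₀) :: gst)).length = (l₀ + 1 - b) + (flatS gst).length :=
          flat_len_cons gst
        have hbk : b = k := by
          have h0 := take_take_getElem_eq htake (i := 0) (by omega) (by omega) (by omega)
          rw [flat_get0 fst hk (by omega), flat_get0 gst hb0 (by omega)] at h0
          omega
        have hstarts := starts_eq fst k l₁ (b, l₀) hcf (by simpa using hbk)
          (fun x hx => hcross x hx (b, l₀) (by simp))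
        rcases lt_or_eq_of_le hmF with hmlt | hmeq
        · -- m < |F|
          have hdge : k ≤ (flatS ((k, l₁) :: fst))[m]'hmlt :=
            flat_lb _ hvf (fun p hp => le_of_eq (hstarts p hp).1.symm) m hmlt
          rcases eq_or_lt_of_le hdge with hda | hda
          · -- F[m] = k : rigid case
            obtain ⟨a', l, q, rr, gr, hal, hrep, hrr1, hgrep, hq1, hmq, hqler, hqlt⟩ :=
              rigid ((k, l₁) :: fst) ((b, l₀) :: gst) m hvf hvg hcf hcg hcross htake hm1
                (le_of_lt hmlt) hmG
                (Or.inr ⟨hmlt, by rw [flat_get0 fst hk (by omega)]; exact hda.symm⟩)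
            obtain ⟨hk1, hk2, hrr, hfst⟩ := rep_head_id hrep
            subst hk1
            subst hk2
            have hqlt' : q < rr := hqlt hmlt
            have hL1 : 1 ≤ l₁ + 1 - k := by omega
            have hWq : (flatS (List.replicate q (k, l₁))).length = q * (l₁ + 1 - k) :=
              w_len k l₁ q
            have hGsplit : flatS ((b, l₀) :: gst) = flatS (List.replicate q (k, l₁)) ++ flatS gr := by
              rw [hgrep, flat_append]
            have hY : (flatS ((b, l₀) :: gst)).drop m = flatS gr := by
              rw [hGsplit]
              exact List.drop_left' (by omega)
            have hFW : flatS ((k, l₁) :: fst) = flatS (List.replicate rr (k, l₁)) := by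
              rw [← hrep]
            have hFlen2 : (flatS ((k, l₁) :: fst)).length = rr * (l₁ + 1 - k) := by
              rw [hFW, w_len]
            -- target decomposition
            have hsplit : flatS (List.replicate rr (k, l₁)) =
                flatS (List.replicate q (k, l₁)) ++ flatS (List.replicate (rr - q) (k, l₁)) := by
              rw [← w_add, show q + (rr - q) = rr by omega]
            have hXdef : (flatS ((k, l₁) :: fst)).drop m = flatS (List.replicate (rr - q) (k, l₁)) := by
              rw [hFW, hsplit]
              exact List.drop_left' (by omega)
            have hXcons : flatS (List.replicate (rr - q) (k, l₁)) =
                k :: (segWord (k + 1) l₁ ++ flatS (List.replicate (rr - q - 1) (k, l₁))) := by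
              rw [show rr - q = (rr - q - 1) + 1 by omega, List.replicate_succ]
              exact flat_head _ hk
            -- the cross hypothesis towards gr
            have hgl : ∀ y ∈ gr.head?, PGE (k, l₁) y := by
              refine rep_append_head_pge hq1 ?_
              rw [← hgrep]
              exact hcg
            have hcr : ∀ p ∈ ((k, l₁) :: fst).getLast?, ∀ y ∈ gr.head?, PGE p y := by
              intro p hp y hy
              rw [last_of_rep hrep p hp]
              exact hgl y hy
            have happ := IH (behead k l₁ fst) gr 0 w₁ (behead_valid hvf)
              (fun p hp => hvg p (by rw [hgrep]; exact List.mem_append_right _ hp))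
              (behead_chain hcf)
              (by
                have : List.Chain' PGE (List.replicate q (k, l₁) ++ gr) := by
                  rw [← hgrep]; exact hcg
                exact (List.isChain_append.mp this).2.1)
              (behead_cross gr hcr) (by simp) (Nat.zero_le _) (Nat.zero_le _)
              (by
                have h1 : (flatS gr).length = (flatS ((b, l₀) :: gst)).length - m := by
                  rw [← hY, List.length_drop]
                omega)
              (by rw [behead_flat hk, List.drop_zero, ← hY]; exact hsh')
            rw [List.drop_zero, behead_flat hk] at happ
            rw [hXdef, hXcons, List.cons_append]
            apply List.cons_le_cons
            have hcalc : (segWord (k + 1) l₁ ++ flatS fst) ++ flatS gr =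
                (segWord (k + 1) l₁ ++ flatS (List.replicate (rr - q - 1) (k, l₁))) ++
                  flatS ((b, l₀) :: gst) := by
              rw [hGsplit, hfst, show fst.length = (rr - q - 1) + q by omega, w_add]
              simp [List.append_assoc]
            rw [← hcalc]
            exact happ
          · -- k < F[m] : strict inequality
            rw [List.drop_eq_getElem_cons hmlt, List.cons_append]
            exact le_of_head_lt hda
        · -- m = |F| : rigid case, target is G itself
          obtain ⟨a', l, q, rr, gr, hal, hrep, hrr1, hgrep, hq1, hmq, hqler, hqlt⟩ :=
            rigid ((k, l₁) :: fst) ((b, l₀) :: gst) m hvf hvg hcf hcg hcross htake hm1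
              hmF hmG (Or.inl hmeq)
          obtain ⟨hk1, hk2, hrr, hfst⟩ := rep_head_id hrep
          subst hk1
          subst hk2
          have hFW : flatS ((k, l₁) :: fst) = flatS (List.replicate rr (k, l₁)) := by
            rw [← hrep]
          have hFlen2 : (flatS ((k, l₁) :: fst)).length = rr * (l₁ + 1 - k) := by
            rw [hFW, w_len]
          have hL1 : 1 ≤ l₁ + 1 - k := by omega
          have hq_r : q = rr := by
            have : q * (l₁ + 1 - k) = rr * (l₁ + 1 - k) := by omega
            exact Nat.eq_of_mul_eq_mul_right (by omega) this
          subst hq_r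
          have hWq : (flatS (List.replicate q (k, l₁))).length = q * (l₁ + 1 - k) :=
            w_len k l₁ q
          have hGsplit : flatS ((b, l₀) :: gst) = flatS (List.replicate q (k, l₁)) ++ flatS gr := by
            rw [hgrep, flat_append]
          have hY : (flatS ((b, l₀) :: gst)).drop m = flatS gr := by
            rw [hGsplit]
            exact List.drop_left' (by omega)
          have hgl : ∀ y ∈ gr.head?, PGE (k, l₁) y := by
            refine rep_append_head_pge hq1 ?_
            rw [← hgrep]
            exact hcg
          have hcr : ∀ p ∈ ((k, l₁) :: fst).getLast?, ∀ y ∈ gr.head?, PGE p y := by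
            intro p hp y hy
            rw [last_of_rep hrep p hp]
            exact hgl y hy
          have happ := IH (behead k l₁ fst) gr 0 w₁ (behead_valid hvf)
            (fun p hp => hvg p (by rw [hgrep]; exact List.mem_append_right _ hp))
            (behead_chain hcf)
            (by
              have : List.Chain' PGE (List.replicate q (k, l₁) ++ gr) := by
                rw [← hgrep]; exact hcg
              exact (List.isChain_append.mp this).2.1)
            (behead_cross gr hcr) (by simp) (Nat.zero_le _) (Nat.zero_le _)
            (by
              have h1 : (flatS gr).length = (flatS ((b, l₀) :: gst)).length - m := by
                rw [← hY, List.length_drop]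
              omega)
            (by rw [behead_flat hk, List.drop_zero, ← hY]; exact hsh')
          rw [List.drop_zero, behead_flat hk] at happ
          rw [hmeq, List.drop_length, List.nil_append]
          have hGis : flatS ((b, l₀) :: gst) =
              k :: ((segWord (k + 1) l₁ ++ flatS fst) ++ flatS gr) := by
            rw [hGsplit, ← hFW, hFc, List.cons_append]
          rw [hGis]
          exact List.cons_le_cons _ happ
    | @right c u v w₁ hsh' =>
      subst hU
      have hmG' : m < (flatS gsp).length := by
        by_contra hcon
        rw [List.drop_eq_nil_of_le (by omega)] at hV
        simp at hV
      rw [List.drop_eq_getElem_cons hmG'] at hV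
      have hV' := hV.symm
      injection hV' with hV1 hV2
      subst hV2
      obtain ⟨⟨k, l₁⟩, fst, rfl⟩ : ∃ pf fst, fsp = pf :: fst := by
        cases fsp with
        | nil => exact absurd flat_nil hF0
        | cons x xs => exact ⟨x, xs, rfl⟩
      obtain ⟨⟨b, l₀⟩, gst, rfl⟩ : ∃ pg gst, gsp = pg :: gst := by
        cases gsp with
        | nil => exact absurd flat_nil hG0
        | cons x xs => exact ⟨x, xs, rfl⟩
      have hk : k ≤ l₁ := hvf (k, l₁) (by simp)
      have hb0 : b ≤ l₀ := hvg (b, l₀) (by simp)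
      have hFc : flatS ((k, l₁) :: fst) = k :: (segWord (k + 1) l₁ ++ flatS fst) :=
        flat_head fst hk
      have hlenF : (flatS ((k, l₁) :: fst)).length = (l₁ + 1 - k) + (flatS fst).length :=
        flat_len_cons fst
      have hlenG : (flatS ((b, l₀) :: gst)).length = (l₀ + 1 - b) + (flatS gst).length :=
        flat_len_cons gst
      rcases Nat.eq_zero_or_pos m with rfl | hm1
      · -- m = 0 : the letter comes from G
        have hcb : (flatS ((b, l₀) :: gst))[0]'(by omega) = b := flat_get0 gst hb0 (by omega)
        rw [hcb] at hV1
        have hble : b ≤ k := by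
          have := head_pge_of_cross fst (k, l₁) (b, l₀) hcf
            (fun x hx => hcross x hx (b, l₀) (by simp))
          rcases this with h | ⟨h, h2⟩ <;> omega
        rcases lt_or_eq_of_le hble with hlt | heqb
        · rw [List.drop_zero, hFc, List.cons_append]
          exact le_of_head_lt (by omega)
        · -- b = k : advance into G
          have htk1 : (flatS ((k, l₁) :: fst)).take 1 = (flatS ((b, l₀) :: gst)).take 1 := by
            rw [hFc, flat_head gst hb0]
            simp [heqb]
          have happ := IH ((k, l₁) :: fst) ((b, l₀) :: gst) 1 w₁ hvf hvg hcf hcg hcross htk1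
            (by omega) (by omega) (by omega)
            (by rw [show (0 : ℕ) + 1 = 1 from rfl] at hsh'; exact hsh')
          rw [List.drop_zero, hFc, List.cons_append]
          rw [show c = k by omega]
          apply List.cons_le_cons
          rw [hFc] at happ
          simpa using happ
      · -- m ≥ 1
        have hbk : b = k := by
          have h0 := take_take_getElem_eq htake (i := 0) (by omega) (by omega) (by omega)
          rw [flat_get0 fst hk (by omega), flat_get0 gst hb0 (by omega)] at h0
          omega
        have hstarts := starts_eq fst k l₁ (b, l₀) hcf (by simpa using hbk)
          (fun x hx => hcross x hx (b, l₀) (by simp))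
        rcases lt_or_eq_of_le hmF with hmlt | hmeq
        · -- m < |F|
          have hdge : k ≤ (flatS ((k, l₁) :: fst))[m]'hmlt :=
            flat_lb _ hvf (fun p hp => le_of_eq (hstarts p hp).1.symm) m hmlt
          rcases lt_trichotomy c ((flatS ((k, l₁) :: fst))[m]'hmlt) with hcd | hcd | hcd
          · -- strict
            rw [List.drop_eq_getElem_cons hmlt, List.cons_append]
            exact le_of_head_lt hcd
          · -- equal heads : advance m
            have htk1 : (flatS ((k, l₁) :: fst)).take (m + 1) =
                (flatS ((b, l₀) :: gst)).take (m + 1) := by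
              rw [List.take_succ, List.take_succ, htake]
              congr 1
              rw [List.getElem?_eq_getElem hmlt, List.getElem?_eq_getElem hmG']
              rw [← hcd, hV1]
            have happ := IH ((k, l₁) :: fst) ((b, l₀) :: gst) (m + 1) w₁ hvf hvg hcf hcg hcross
              htk1 (by omega) (by omega) (by omega) hsh'
            rw [List.drop_eq_getElem_cons hmlt, List.cons_append, hcd]
            exact List.cons_le_cons _ happ
          · -- c > F[m] : impossible
            exfalso
            have hFpos := flat_pos ((k, l₁) :: fst) hvf hcf (m - 1) (by omega)
            have hGpos := flat_pos ((b, l₀) :: gst) hvg hcg (m - 1) (by omega)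
            simp only [show m - 1 + 1 = m by omega] at hFpos hGpos
            have hprev : (flatS ((k, l₁) :: fst))[m - 1]'(by omega) =
                (flatS ((b, l₀) :: gst))[m - 1]'(by omega) :=
              take_take_getElem_eq htake (by omega) (by omega) (by omega)
            have hkprev : k ≤ (flatS ((k, l₁) :: fst))[m - 1]'(by omega) :=
              flat_lb _ hvf (fun p hp => le_of_eq (hstarts p hp).1.symm) (m - 1) (by omega)
            rcases hGpos with hg | ⟨p, hpmem, hpe, hple⟩
            · -- G[m] = G[m-1] + 1
              rcases hFpos with hf | ⟨p', hp'mem, hp'e, hp'le⟩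
              · omega
              · -- F[m] is a segment start, hence = k : rigid contradiction
                have hdk : (flatS ((k, l₁) :: fst))[m]'hmlt = k := by
                  rw [hp'e, (hstarts p' hp'mem).1]
                obtain ⟨a', l, q, rr, gr, hal, hrep, hrr1, hgrep, hq1, hmq, hqler, hqlt⟩ :=
                  rigid ((k, l₁) :: fst) ((b, l₀) :: gst) m hvf hvg hcf hcg hcross htake hm1
                    (le_of_lt hmlt) (le_of_lt hmG')
                    (Or.inr ⟨hmlt, by rw [hdk, flat_get0 fst hk (by omega)]⟩)
                obtain ⟨hk1, hk2, hrr, hfst⟩ := rep_head_id hrep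
                subst hk1
                subst hk2
                have hWq : (flatS (List.replicate q (k, l₁))).length = q * (l₁ + 1 - k) :=
                  w_len k l₁ q
                have hGsplit : flatS ((b, l₀) :: gst) =
                    flatS (List.replicate q (k, l₁)) ++ flatS gr := by
                  rw [hgrep, flat_append]
                have hY : (flatS ((b, l₀) :: gst)).drop m = flatS gr := by
                  rw [hGsplit]
                  exact List.drop_left' (by omega)
                have hgl : ∀ y ∈ gr.head?, PGE (k, l₁) y := by
                  refine rep_append_head_pge hq1 ?_
                  rw [← hgrep]
                  exact hcg
                have hgrc : flatS gr = c :: (flatS ((b, l₀) :: gst)).drop (m + 1) := by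
                  rw [← hY, List.drop_eq_getElem_cons hmG', hV1]
                obtain ⟨⟨cg, lg⟩, grt, rfl⟩ : ∃ ph grt, gr = ph :: grt := by
                  cases gr with
                  | nil => exfalso; rw [flat_nil] at hgrc; simp at hgrc
                  | cons x xs => exact ⟨x, xs, rfl⟩
                have hcgv : cg ≤ lg := hvg (cg, lg)
                  (by rw [hgrep]; exact List.mem_append_right _ (by simp))
                rw [flat_head grt hcgv] at hgrc
                injection hgrc with hcg1 _
                have hcgk : cg ≤ k := by
                  have := hgl (cg, lg) (by simp)
                  rcases this with h | ⟨h, h2⟩ <;> omega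
                omega
            · -- G[m] is a gs-segment start : bounded by k
              have hpk : p.1 ≤ k := by
                rcases List.mem_cons.mp hpmem with rfl | hp'
                · simp; omega
                · have := chain_head_all gst (b, l₀) hcg p hp'
                  rcases this with h | ⟨h, h2⟩ <;> omega
              omega
        · -- m = |F|
          obtain ⟨a', l, q, rr, gr, hal, hrep, hrr1, hgrep, hq1, hmq, hqler, hqlt⟩ :=
            rigid ((k, l₁) :: fst) ((b, l₀) :: gst) m hvf hvg hcf hcg hcross htake hm1
              hmF (le_of_lt hmG') (Or.inl hmeq)
          obtain ⟨hk1, hk2, hrr, hfst⟩ := rep_head_id hrep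
          subst hk1
          subst hk2
          have hFW : flatS ((k, l₁) :: fst) = flatS (List.replicate rr (k, l₁)) := by
            rw [← hrep]
          have hFlen2 : (flatS ((k, l₁) :: fst)).length = rr * (l₁ + 1 - k) := by
            rw [hFW, w_len]
          have hL1 : 1 ≤ l₁ + 1 - k := by omega
          have hq_r : q = rr := by
            have : q * (l₁ + 1 - k) = rr * (l₁ + 1 - k) := by omega
            exact Nat.eq_of_mul_eq_mul_right (by omega) this
          subst hq_r
          have hWq : (flatS (List.replicate q (k, l₁))).length = q * (l₁ + 1 - k) :=
            w_len k l₁ q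
          have hGsplit : flatS ((b, l₀) :: gst) = flatS (List.replicate q (k, l₁)) ++ flatS gr := by
            rw [hgrep, flat_append]
          have hY : (flatS ((b, l₀) :: gst)).drop m = flatS gr := by
            rw [hGsplit]
            exact List.drop_left' (by omega)
          have hgl : ∀ y ∈ gr.head?, PGE (k, l₁) y := by
            refine rep_append_head_pge hq1 ?_
            rw [← hgrep]
            exact hcg
          have hgrc : flatS gr = c :: (flatS ((b, l₀) :: gst)).drop (m + 1) := by
            rw [← hY, List.drop_eq_getElem_cons hmG', hV1]
          obtain ⟨⟨cg, lg⟩, grt, rfl⟩ : ∃ ph grt, gr = ph :: grt := by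
            cases gr with
            | nil => exfalso; rw [flat_nil] at hgrc; simp at hgrc
            | cons x xs => exact ⟨x, xs, rfl⟩
          have hcgk : cg ≤ k := by
            have := hgl (cg, lg) (by simp)
            rcases this with h | ⟨h, h2⟩ <;> omega
          have hcgv : cg ≤ lg := hvg (cg, lg)
            (by rw [hgrep]; exact List.mem_append_right _ (by simp))
          have hcval : c = cg := by
            rw [flat_head grt hcgv] at hgrc
            injection hgrc with h1 _
            omega
          have hGis : flatS ((b, l₀) :: gst) =
              k :: ((segWord (k + 1) l₁ ++ flatS fst) ++ flatS ((cg, lg) :: grt)) := by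
            rw [hGsplit, ← hFW, hFc, List.cons_append]
          rw [hmeq, List.drop_length, List.nil_append, hGis]
          rcases lt_or_eq_of_le hcgk with hlt | heqk
          · exact le_of_head_lt (by omega)
          · -- c = k : recurse shifting one letter of gr
            have htk1 : (flatS ((k, l₁) :: fst)).take 1 = (flatS ((cg, lg) :: grt)).take 1 := by
              rw [hFc, flat_head grt hcgv]
              simp [heqk]
            have hcrg : ∀ p ∈ ((k, l₁) :: fst).getLast?, ∀ y ∈ ((cg, lg) :: grt).head?,
                PGE p y := by
              intro p hp y hy
              rw [last_of_rep hrep p hp]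
              exact hgl y hy
            have hsh'' : IsShuffle (flatS ((k, l₁) :: fst)) ((flatS ((cg, lg) :: grt)).drop 1)
                w₁ := by
              have hdd : (flatS ((cg, lg) :: grt)).drop 1 =
                  (flatS ((b, l₀) :: gst)).drop (m + 1) := by
                rw [← hY, List.drop_drop]
              rw [hdd]
              exact hsh'
            have hvgr : Valid ((cg, lg) :: grt) := fun p hp =>
              hvg p (by rw [hgrep]; exact List.mem_append_right _ hp)
            have hcgr : List.Chain' PGE ((cg, lg) :: grt) := by
              have : List.Chain' PGE (List.replicate q (k, l₁) ++ (cg, lg) :: grt) := by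
                rw [← hgrep]; exact hcg
              exact (List.isChain_append.mp this).2.1
            have hgrlen : (flatS ((cg, lg) :: grt)).length =
                (flatS ((b, l₀) :: gst)).length - m := by
              rw [← hY, List.length_drop]
            have happ := IH ((k, l₁) :: fst) ((cg, lg) :: grt) 1 w₁ hvf hvgr hcf hcgr hcrg htk1
              (by omega) (by rw [hgrlen]; omega) (by omega) hsh''
            rw [hFc] at happ
            rw [show c = k by omega]
            apply List.cons_le_cons
            simpa using happ

/-! ### converting segment-word data to pair data -/

lemma pge_of_seg_le {k l k' l' : ℕ} (hk : k ≤ l) (hk' : k' ≤ l')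
    (h : segWord k' l' ≤ segWord k l) : PGE (k, l) (k', l') := by
  rcases lt_trichotomy k' k with h1 | h1 | h1
  · exact Or.inl h1
  · subst h1
    refine Or.inr ⟨rfl, ?_⟩
    by_contra hl
    push_neg at hl
    have e2 : segWord k' l' = segWord k' l ++ List.range' (l + 1) (l' - l) 1 := by
      have e := List.range'_append (s := k') (m := l + 1 - k') (n := l' - l) (step := 1)
      rw [show k' + 1 * (l + 1 - k') = l + 1 by omega,
        show (l + 1 - k') + (l' - l) = l' + 1 - k' by omega] at e
      exact e.symm
    have e3 : List.range' (l + 1) (l' - l) 1 = (l + 1) :: List.range' (l + 2) (l' - l - 1) 1 := by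
      rw [show l' - l = (l' - l - 1) + 1 by omega, List.range'_succ]
      congr 2 <;> omega
    have hlt : segWord k' l < segWord k' l' := by
      rw [e2, e3]
      exact lt_append _
    exact absurd (lt_of_le_of_lt h hlt) (lt_irrefl _)
  · exfalso
    rw [seg_cons hk, seg_cons hk'] at h
    exact absurd (head_le_of_le h) (by omega)

lemma chain'_imp_mem {α : Type*} {R S : α → α → Prop} :
    ∀ (l : List α), (∀ x ∈ l, ∀ y ∈ l, R x y → S x y) → List.Chain' R l → List.Chain' S l
  | [] => fun _ _ => List.isChain_nil
  | x :: t => fun himp hc => by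
    simp only [List.Chain', List.isChain_cons] at hc ⊢
    constructor
    · intro y hy
      exact himp x (by simp) y (List.mem_cons_of_mem _ (List.mem_of_mem_head? hy)) (hc.1 y hy)
    · exact chain'_imp_mem t (fun p hp q hq h => himp p (by simp [hp]) q (by simp [hq]) h) hc.2

lemma exists_pairs (n : ℕ) : ∀ (fs : List (List ℕ)), (∀ w ∈ fs, IsSegment n w) →
    ∃ ps : List (ℕ × ℕ), Valid ps ∧ fs = ps.map fun p => segWord p.1 p.2 := by
  intro fs
  induction fs with
  | nil => exact fun _ => ⟨[], fun p hp => absurd hp (List.not_mem_nil), by simp⟩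
  | cons wd t ih =>
    intro h
    obtain ⟨k, l, h1, h2, h3, hw⟩ := h wd (by simp)
    obtain ⟨ps, hv, hmap⟩ := ih (fun x hx => h x (by simp [hx]))
    refine ⟨(k, l) :: ps, ?_, ?_⟩
    · intro p hp
      rcases List.mem_cons.mp hp with rfl | hp'
      · exact h2
      · exact hv p hp'
    · rw [List.map_cons, ← hw, ← hmap]

end MaxSh

/-- Let μ = i^(1) ⋯ i^(r) and μ' = i'^(1) ⋯ i'^(r') be dominant words given by their
canonical factorizations (weakly decreasing lists `fs`, `gs` of segments).  If the last
factor of μ is ≥ the first factor of μ', then the lexicographically greatest shuffle of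
μ and μ' is the concatenation μμ'. -/

theorem maxShuffle_eq_append_of_ordered_factorizations (n : ℕ) (hn : 1 ≤ n)
    (fs gs : List (List ℕ))
    (hfs_seg : ∀ w ∈ fs, IsSegment n w) (hfs_dec : List.Chain' (· ≥ ·) fs)
    (hgs_seg : ∀ w ∈ gs, IsSegment n w) (hgs_dec : List.Chain' (· ≥ ·) gs)
    (hcross : ∀ a ∈ fs.getLast?, ∀ b ∈ gs.head?, b ≤ a) :
    IsGreatest {w | IsShuffle fs.flatten gs.flatten w} (fs.flatten ++ gs.flatten) := by
  constructor
  · exact MaxSh.shuffle_append _ _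
  · intro w hw
    obtain ⟨psf, hvf, rfl⟩ := MaxSh.exists_pairs n fs hfs_seg
    obtain ⟨psg, hvg, rfl⟩ := MaxSh.exists_pairs n gs hgs_seg
    have hcf : List.Chain' MaxSh.PGE psf :=
      MaxSh.chain'_imp_mem psf
        (fun x hx y hy h => MaxSh.pge_of_seg_le (hvf x hx) (hvf y hy) h)
        ((List.isChain_map _).mp hfs_dec)
    have hcg : List.Chain' MaxSh.PGE psg :=
      MaxSh.chain'_imp_mem psg
        (fun x hx y hy h => MaxSh.pge_of_seg_le (hvg x hx) (hvg y hy) h)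
        ((List.isChain_map _).mp hgs_dec)
    have hcross' : ∀ p ∈ psf.getLast?, ∀ q ∈ psg.head?, MaxSh.PGE p q := by
      intro p hp q hq
      refine MaxSh.pge_of_seg_le (hvf p (List.mem_of_mem_getLast? hp))
        (hvg q (List.mem_of_mem_head? hq)) (hcross _ ?_ _ ?_)
      · rw [List.getLast?_map]
        exact Option.mem_map_of_mem _ hp
      · rw [List.head?_map]
        exact Option.mem_map_of_mem _ hq
    have hkey := MaxSh.key ((MaxSh.flatS psf).length + (MaxSh.flatS psg).length)
      psf psg 0 w hvf hvg hcf hcg hcross' rfl (Nat.zero_le _) (Nat.zero_le _)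
      (by omega) (by rw [List.drop_zero]; exact hw)
    rw [List.drop_zero] at hkey
    exact hkey
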